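/- Let m = 2r−1 be odd, k, n with k+m ≤ n, Z an n×(k+m) matrix with positive maximal minors, C a k×n matrix, Y = CZ. Let B = (b_1, b_1+1, ..., b_{r−1}, b_{r−1}+1) be a list of m−1 integers in [n]. Then the sequence (⟨Y, B, i⟩)_{i=1,...,n} changes sign (ignoring zeros) at most k times. -/

import Mathlib

/-- Twistor coordinate. -/
noncomputable def twistor {k m n : ℕ} (Z : Matrix (Fin n) (Fin (k + m)) ℝ)
    (Y : Matrix (Fin k) (Fin (k + m)) ℝ) (L : Fin m → Fin n) : ℝ :=
  Matrix.det (Matrix.of fun i j : Fin k ⊕ Fin m =>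
    Sum.elim (fun a => Y a) (fun b => Z (L b)) i (finSumFinEquiv j))

def PosMaximalMinors {n p : ℕ} (Z : Matrix (Fin n) (Fin p) ℝ) : Prop :=
  ∀ f : Fin p → Fin n, StrictMono f → 0 < Matrix.det (Matrix.of fun a b => Z (f a) b)

def ConsecPairs {m n : ℕ} (I : Fin m → Fin n) : Prop :=
  ∀ a b : Fin m, (a : ℕ) + 1 = (b : ℕ) → (a : ℕ) % 2 = 0 → (I b : ℕ) = (I a : ℕ) + 1

/-- The number of sign changes of a list of reals, ignoring zeros: remove the zero entries
and count adjacent pairs of opposite sign. -/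
noncomputable def signFlips (l : List ℝ) : ℕ :=
  let l' := l.filter fun x => decide (x ≠ 0)
  (l'.zip l'.tail).countP fun p => decide (p.1 * p.2 < 0)


open Matrix Finset in
lemma cofactor_orth {p : ℕ} (A : Matrix (Fin (p+1)) (Fin p) ℝ) (j : Fin p) :
    ∑ s : Fin (p+1), (-1:ℝ)^(s:ℕ) * (A.submatrix s.succAbove id).det * A s j = 0 := by
  set M : Matrix (Fin (p+1)) (Fin (p+1)) ℝ :=
    Matrix.of (fun s => Fin.snoc (A s) (A s j)) with hM
  have hsnoc : ∀ s t, M s (Fin.castSucc t) = A s t := by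
    intro s t; simp [hM, Fin.snoc_castSucc]
  have hlast : ∀ s, M s (Fin.last p) = A s j := by
    intro s; simp [hM]
  have hdet0 : M.det = 0 := by
    rw [← Matrix.det_transpose]
    apply Matrix.det_zero_of_row_eq (i := Fin.castSucc j) (j := Fin.last p)
    · exact (Fin.castSucc_lt_last j).ne
    · funext s
      simp [Matrix.transpose_apply, hsnoc, hlast]
  have hexp := Matrix.det_succ_column M (Fin.last p)
  rw [hdet0] at hexp
  have hsub : ∀ s : Fin (p+1), (M.submatrix s.succAbove (Fin.last p).succAbove)
      = A.submatrix s.succAbove id := by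
    intro s
    funext a b
    simp [Matrix.submatrix_apply, Fin.succAbove_last, hsnoc]
  have h2 : (0:ℝ) = ∑ s : Fin (p+1), (-1:ℝ)^(p:ℕ) *
      ((-1:ℝ)^(s:ℕ) * (A.submatrix s.succAbove id).det * A s j) := by
    rw [hexp]
    refine Finset.sum_congr rfl fun s _ => ?_
    rw [hsub s, hlast s, pow_add, Fin.val_last]
    ring
  rw [← Finset.mul_sum] at h2
  have hne : ((-1:ℝ)^(p:ℕ)) ≠ 0 := by positivity
  exact (mul_eq_zero.mp h2.symm).resolve_left hne

lemma twistor_snoc_self_zero {k m n : ℕ} (Z : Matrix (Fin n) (Fin (k+(m+1))) ℝ)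
    (Y : Matrix (Fin k) (Fin (k+(m+1))) ℝ) (B : Fin m → Fin n) (a : Fin m) :
    twistor Z Y (Fin.snoc B (B a)) = 0 := by
  apply Matrix.det_zero_of_row_eq
    (i := (Sum.inr (Fin.castSucc a) : Fin k ⊕ Fin (m+1)))
    (j := (Sum.inr (Fin.last m) : Fin k ⊕ Fin (m+1)))
  · simp [(Fin.castSucc_lt_last a).ne]
  · funext jj
    simp [Fin.snoc_castSucc, Fin.snoc_last]

lemma twistor_snoc_eq_sum {k m n : ℕ} (Z : Matrix (Fin n) (Fin (k+(m+1))) ℝ)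
    (Y : Matrix (Fin k) (Fin (k+(m+1))) ℝ) (B : Fin m → Fin n) :
    ∃ w : Fin (k+(m+1)) → ℝ, ∀ i : Fin n,
      twistor Z Y (Fin.snoc B i) = ∑ j, Z i j * w j := by
  classical
  set M₀ : Matrix (Fin k ⊕ Fin (m+1)) (Fin k ⊕ Fin (m+1)) ℝ :=
    Matrix.of (fun i jj => Sum.elim (fun a => Y a)
      (fun b => (Fin.snoc (fun b' => Z (B b')) 0 : Fin (m+1) → Fin (k+(m+1)) → ℝ) b) i (finSumFinEquiv jj))
    with hM₀
  set e : Fin (k+(m+1)) → (Fin k ⊕ Fin (m+1) → ℝ) :=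
    fun j jj => if finSumFinEquiv jj = j then 1 else 0 with he
  refine ⟨fun j => (M₀.updateRow (Sum.inr (Fin.last m)) (e j)).det, fun i => ?_⟩
  have key1 : twistor Z Y (Fin.snoc B i)
      = (M₀.updateRow (Sum.inr (Fin.last m)) (fun jj => Z i (finSumFinEquiv jj))).det := by
    unfold twistor
    congr 1
    funext i' jj
    rcases i' with a | b
    · rw [Matrix.updateRow_ne (by simp)]
      simp [hM₀]
    · induction b using Fin.lastCases with
      | last =>
        rw [Matrix.updateRow_self]
        simp [Fin.snoc_last]
      | cast b' =>
        rw [Matrix.updateRow_ne (by simp [(Fin.castSucc_lt_last b').ne])]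
        simp [hM₀, Fin.snoc_castSucc]
  have key2 : (fun jj => Z i (finSumFinEquiv jj))
      = ∑ j : Fin (k+(m+1)), Z i j • e j := by
    funext jj
    simp [he, Finset.sum_apply]
  rw [key1, key2]
  have : ∀ u : Fin k ⊕ Fin (m+1) → ℝ,
      (M₀.updateRow (Sum.inr (Fin.last m)) u).det
        = Matrix.detRowAlternating.toMultilinearMap (Function.update M₀ (Sum.inr (Fin.last m)) u) := fun u => rfl
  rw [this]
  rw [MultilinearMap.map_update_sum Matrix.detRowAlternating.toMultilinearMap Finset.univ
    (Sum.inr (Fin.last m)) (fun j => Z i j • e j) M₀]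
  refine Finset.sum_congr rfl fun j _ => ?_
  exact Matrix.detRowAlternating.toMultilinearMap.map_update_smul (M₀ : Fin k ⊕ Fin (m+1) → Fin k ⊕ Fin (m+1) → ℝ) _ _ _

lemma alt_chain_aux : ∀ (l : List ℝ) (a : ℝ), (∀ x ∈ a :: l, x ≠ 0) →
    ∃ y ys, List.Sublist (y :: ys) (a :: l) ∧ (y :: ys).Chain' (fun u v => u * v < 0) ∧
      (y :: ys).length = (((a :: l).zip l).countP fun q => decide (q.1 * q.2 < 0)) + 1 ∧
      0 < y * a := by
  intro l
  induction l with
  | nil =>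
    intro a h
    exact ⟨a, [], List.Sublist.refl _, List.isChain_singleton _, by simp,
      mul_self_pos.mpr (h a (by simp))⟩
  | cons b l' IH =>
    intro a h
    have ha : a ≠ 0 := h a (by simp)
    have hb : b ≠ 0 := h b (by simp)
    have hbb : 0 < b * b := mul_self_pos.mpr hb
    obtain ⟨y, ys, hsub, hchain, hlen, hy⟩ := IH b (fun x hx => h x (by simp at hx ⊢; tauto))
    have hzip : ((a :: b :: l').zip (b :: l')) = (a, b) :: ((b :: l').zip l') := rfl
    by_cases hab : a * b < 0
    · refine ⟨a, y :: ys, List.Sublist.cons₂ a hsub, ?_, ?_, mul_self_pos.mpr ha⟩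
      · refine List.isChain_cons_cons.mpr ?_
        refine ⟨?_, hchain⟩
        nlinarith
      · rw [hzip, List.countP_cons]
        simp only [hab, decide_true, List.length_cons, if_pos] at *
        omega
    · have hab' : 0 < a * b := lt_of_le_of_ne (not_lt.mp hab) (Ne.symm (mul_ne_zero ha hb))
      refine ⟨y, ys, hsub.trans (List.sublist_cons_self a (b :: l')), hchain, ?_, by nlinarith⟩
      rw [hzip, List.countP_cons]
      simp only [hab, decide_false] at *
      simpa using hlen

lemma exists_alt_sublist (l : List ℝ) (t : ℕ) (h : t + 1 ≤ signFlips l) :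
    ∃ xs : List ℝ, List.Sublist xs l ∧ xs.length = t + 2 ∧ xs.Chain' (fun u v => u * v < 0) := by
  set l' := l.filter (fun x => decide (x ≠ 0)) with hl'
  have hmem : ∀ x ∈ l', x ≠ 0 := by
    intro x hx
    have := List.of_mem_filter hx
    simpa using this
  have hsf : signFlips l = (l'.zip l'.tail).countP fun q => decide (q.1 * q.2 < 0) := rfl
  match hcase : l' with
  | [] => rw [hsf, hcase] at h; simp at h
  | a :: l'' =>
    rw [hcase] at hmem
    obtain ⟨y, ys, hsub, hchain, hlen, -⟩ := alt_chain_aux l'' a hmem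
    rw [hsf, hcase] at h
    simp only [List.tail_cons] at h
    refine ⟨(y :: ys).take (t + 2), ?_, ?_, hchain.take _⟩
    · exact ((y :: ys).take_sublist _).trans
        ((hsub.trans (by rw [← hcase])).trans (l.filter_sublist))
    · rw [List.length_take, hlen]
      omega

lemma exists_alt_indices {n : ℕ} (t : ℕ) (v : Fin n → ℝ)
    (h : t + 1 ≤ signFlips ((List.finRange n).map v)) :
    ∃ g : Fin (t+2) → Fin n, StrictMono g ∧
      ∀ s : Fin (t+1), v (g s.castSucc) * v (g s.succ) < 0 := by
  obtain ⟨xs, hsub, hlen, hchain⟩ := exists_alt_sublist _ t h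
  rw [List.sublist_iff_exists_fin_orderEmbedding_get_eq] at hsub
  obtain ⟨f, hf⟩ := hsub
  have hN : ((List.finRange n).map v).length = n := by simp
  have hget : ∀ j, ((List.finRange n).map v).get j = v (Fin.cast hN j) := by
    intro j
    simp only [List.get_eq_getElem, List.getElem_map, List.getElem_finRange]
    rfl
  refine ⟨fun s => Fin.cast hN (f (Fin.cast hlen.symm s)), ?_, ?_⟩
  · intro s₁ s₂ hlt
    have h1 : (Fin.cast hlen.symm s₁ : Fin xs.length) < Fin.cast hlen.symm s₂ := by
      rw [Fin.lt_def] at hlt ⊢; exact hlt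
    have h2 := f.strictMono h1
    rw [Fin.lt_def] at h2 ⊢
    exact h2
  · intro s
    have hxs : ∀ s' : Fin (t+2), xs.get (Fin.cast hlen.symm s') =
        v (Fin.cast hN (f (Fin.cast hlen.symm s'))) := fun s' => hf _ ▸ (hget _)
    rw [← hxs, ← hxs]
    have := List.isChain_iff_getElem.mp hchain (s : ℕ) (by rw [hlen]; omega)
    convert this using 3 <;> simp [Fin.ext_iff]

lemma even_count_pairs {r n : ℕ} (B : Fin (2*r) → Fin n)
    (hpair : ConsecPairs B) (x : Fin n) (hx : ∀ a, B a ≠ x) :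
    Even (Finset.univ.filter (fun a => B a < x)).card := by
  classical
  set S := Finset.univ.filter (fun a : Fin (2*r) => B a < x) with hS
  set Se := S.filter (fun a : Fin (2*r) => (a : ℕ) % 2 = 0) with hSe
  set So := S.filter (fun a : Fin (2*r) => ¬ ((a : ℕ) % 2 = 0)) with hSo
  have hsplit : Se.card + So.card = S.card :=
    Finset.card_filter_add_card_filter_not _
  have hmemSe : ∀ a : Fin (2*r), a ∈ Se ↔ (B a < x ∧ (a : ℕ) % 2 = 0) := by
    intro a; simp [hSe, hS]
  have hmemSo : ∀ a : Fin (2*r), a ∈ So ↔ (B a < x ∧ ¬ ((a : ℕ) % 2 = 0)) := by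
    intro a; simp [hSo, hS]
  have heq : Se.card = So.card := by
    apply Finset.card_nbij'
      (i := fun (a : Fin (2*r)) => if h : (a : ℕ) + 1 < 2*r then (⟨(a : ℕ) + 1, h⟩ : Fin (2*r)) else a)
      (j := fun (b : Fin (2*r)) => (⟨(b : ℕ) - 1, by have := b.isLt; omega⟩ : Fin (2*r)))
    · intro a ha
      obtain ⟨hlt, hev⟩ := (hmemSe a).mp ha
      have hbl : (a : ℕ) + 1 < 2*r := by have := a.isLt; omega
      simp only [dif_pos hbl]
      set b : Fin (2*r) := ⟨(a : ℕ) + 1, hbl⟩ with hbdef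
      have hpb := hpair a b rfl hev
      refine (hmemSo b).mpr ⟨?_, by rw [hbdef]; simp only [Fin.val_mk]; omega⟩
      have hne : (B b : ℕ) ≠ (x : ℕ) := fun hc => hx b (Fin.ext hc)
      have hax : (B a : ℕ) < (x : ℕ) := hlt
      exact Fin.lt_def.mpr (by omega)
    · intro b hb
      obtain ⟨hlt, hod⟩ := (hmemSo b).mp hb
      set a : Fin (2*r) := ⟨(b : ℕ) - 1, by have := b.isLt; omega⟩ with hadef
      have hpb := hpair a b (by rw [hadef]; simp only [Fin.val_mk]; omega) (by rw [hadef]; simp only [Fin.val_mk]; omega)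
      refine (hmemSe a).mpr ⟨?_, by rw [hadef]; simp only [Fin.val_mk]; omega⟩
      have hbx : (B b : ℕ) < (x : ℕ) := hlt
      exact Fin.lt_def.mpr (by omega)
    · intro a ha
      obtain ⟨-, hev⟩ := (hmemSe a).mp ha
      have hbl : (a : ℕ) + 1 < 2*r := by have := a.isLt; omega
      simp only [dif_pos hbl]
      apply Fin.ext; simp
    · intro b hb
      obtain ⟨-, hod⟩ := (hmemSo b).mp hb
      have h1 : (b : ℕ) - 1 + 1 < 2*r := by have := b.isLt; omega
      simp only [dif_pos h1]
      apply Fin.ext; simp; omega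
  exact ⟨Se.card, by omega⟩

open Finset in
lemma orderEmbOfFin_position {N n : ℕ} (T : Finset (Fin n)) (hc : T.card = N)
    (x : Fin n) (hx : x ∈ T) :
    ∃ s : Fin N, (s : ℕ) = (T.filter (· < x)).card ∧ T.orderEmbOfFin hc s = x := by
  classical
  have hrange : Set.range (T.orderEmbOfFin hc) = ↑T := T.range_orderEmbOfFin hc
  have : x ∈ Set.range (T.orderEmbOfFin hc) := by rw [hrange]; exact_mod_cast hx
  obtain ⟨s, hs⟩ := this
  refine ⟨s, ?_, hs⟩
  have himg : T.filter (· < x) =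
      (Finset.univ.filter (· < s)).image (T.orderEmbOfFin hc) := by
    ext y
    simp only [Finset.mem_filter, Finset.mem_image, Finset.mem_univ, true_and]
    constructor
    · rintro ⟨hyT, hyx⟩
      have : y ∈ Set.range (T.orderEmbOfFin hc) := by rw [hrange]; exact_mod_cast hyT
      obtain ⟨s', hs'⟩ := this
      refine ⟨s', ?_, hs'⟩
      rw [← hs, ← hs'] at hyx
      exact (T.orderEmbOfFin hc).strictMono.lt_iff_lt.mp hyx
    · rintro ⟨s', hlt, rfl⟩
      exact ⟨T.orderEmbOfFin_mem hc s', hs ▸ (T.orderEmbOfFin hc).strictMono hlt⟩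
  rw [himg, Finset.card_image_of_injective _ (T.orderEmbOfFin hc).injective]
  have : Finset.univ.filter (· < s) = Finset.Iio s := by
    ext y; simp
  rw [this, Fin.card_Iio]

/-- For `m = 2r+1` odd, `Z` with positive maximal minors, `C` an arbitrary `k × n` matrix,
`Y = C Z`, and `B` a pair list of length `2r` (paper's `m − 1`), the sequence
`(⟨Y, B, i⟩)_{i ∈ [n]}` changes sign at most `k` times (ignoring zeros). -/
theorem stmt10 (k r n : ℕ) (hmn : k + (2 * r + 1) ≤ n)
    (Z : Matrix (Fin n) (Fin (k + (2 * r + 1))) ℝ) (hZ : PosMaximalMinors Z)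
    (C : Matrix (Fin k) (Fin n) ℝ)
    (B : Fin (2 * r) → Fin n) (hB : StrictMono B) (hpair : ConsecPairs B) :
    signFlips ((List.finRange n).map fun i => twistor Z (C * Z) (Fin.snoc B i)) ≤ k := by
  classical
  by_contra hcon
  push_neg at hcon
  set v : Fin n → ℝ := fun i => twistor Z (C * Z) (Fin.snoc B i) with hv
  have hsf : k + 1 ≤ signFlips ((List.finRange n).map v) := hcon
  obtain ⟨g, hg, halt⟩ := exists_alt_indices k v hsf
  obtain ⟨w, hw⟩ := twistor_snoc_eq_sum (m := 2*r) Z (C*Z) B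
  have hvB : ∀ a, v (B a) = 0 := fun a => twistor_snoc_self_zero Z (C*Z) B a
  have hvg : ∀ t : Fin (k+2), v (g t) ≠ 0 := by
    intro t h0
    by_cases ht : (t : ℕ) < k + 1
    · have heq : t = (⟨(t:ℕ), ht⟩ : Fin (k+1)).castSucc := Fin.ext rfl
      have := halt ⟨(t:ℕ), ht⟩
      rw [← heq, h0] at this
      simp at this
    · have htv : (t : ℕ) = k + 1 := by have := t.isLt; omega
      have hk : (k : ℕ) < k + 1 := by omega
      have heq : t = (⟨k, hk⟩ : Fin (k+1)).succ := Fin.ext (by simp [htv])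
      have := halt ⟨k, hk⟩
      rw [← heq, h0] at this
      simp at this
  have hgB : ∀ (t : Fin (k+2)) (a : Fin (2*r)), g t ≠ B a := by
    intro t a h
    exact hvg t (by rw [h, hvB])
  set T : Finset (Fin n) := (Finset.univ.image g) ∪ (Finset.univ.image B) with hT
  have hdisj : Disjoint (Finset.univ.image g) (Finset.univ.image B) := by
    rw [Finset.disjoint_left]
    rintro x hx1 hx2
    obtain ⟨t, -, rfl⟩ := Finset.mem_image.mp hx1
    obtain ⟨a, -, ha⟩ := Finset.mem_image.mp hx2
    exact hgB t a ha.symm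
  have hcardT : T.card = (k + (2*r+1)) + 1 := by
    rw [hT, Finset.card_union_of_disjoint hdisj,
        Finset.card_image_of_injective _ hg.injective,
        Finset.card_image_of_injective _ hB.injective]
    simp only [Finset.card_univ, Fintype.card_fin]
    omega
  set F := T.orderEmbOfFin hcardT with hF
  set A : Matrix (Fin ((k+(2*r+1))+1)) (Fin (k+(2*r+1))) ℝ :=
    Matrix.of (fun s j => Z (F s) j) with hA
  set d : Fin ((k+(2*r+1))+1) → ℝ := fun s => (A.submatrix s.succAbove id).det with hd
  have hdpos : ∀ s, 0 < d s := by
    intro s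
    have hsm : StrictMono (fun a => F (s.succAbove a)) :=
      F.strictMono.comp (Fin.strictMono_succAbove s)
    exact hZ (fun a => F (s.succAbove a)) hsm
  have hsum0 : ∑ s : Fin ((k+(2*r+1))+1), (-1:ℝ)^(s:ℕ) * d s * v (F s) = 0 := by
    have hvF : ∀ s, v (F s) = ∑ j, A s j * w j := by
      intro s
      rw [hv]
      exact hw (F s)
    calc ∑ s : Fin ((k+(2*r+1))+1), (-1:ℝ)^(s:ℕ) * d s * v (F s)
        = ∑ s : Fin ((k+(2*r+1))+1), ∑ j, ((-1:ℝ)^(s:ℕ) * d s * A s j) * w j := by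
          refine Finset.sum_congr rfl fun s _ => ?_
          rw [hvF s, Finset.mul_sum]
          refine Finset.sum_congr rfl fun j _ => ?_
          ring
      _ = ∑ j, (∑ s : Fin ((k+(2*r+1))+1), (-1:ℝ)^(s:ℕ) * d s * A s j) * w j := by
          rw [Finset.sum_comm]
          refine Finset.sum_congr rfl fun j _ => ?_
          rw [Finset.sum_mul]
      _ = 0 := by
          refine Finset.sum_eq_zero fun j _ => ?_
          rw [cofactor_orth A j]
          ring
  have hpos : ∀ t : Fin (k+2), ∃ s : Fin ((k+(2*r+1))+1),
      F s = g t ∧ (-1:ℝ)^(s:ℕ) = (-1:ℝ)^(t:ℕ) := by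
    intro t
    have hmemT : g t ∈ T := by
      rw [hT]
      exact Finset.mem_union_left _ (Finset.mem_image_of_mem g (Finset.mem_univ t))
    obtain ⟨s, hscard, hseq⟩ := orderEmbOfFin_position T hcardT (g t) hmemT
    refine ⟨s, hseq, ?_⟩
    have hfilter : T.filter (· < g t) =
        ((Finset.univ.image g).filter (· < g t)) ∪
        ((Finset.univ.image B).filter (· < g t)) := by
      rw [hT, Finset.filter_union]
    have hdisj2 : Disjoint ((Finset.univ.image g).filter (· < g t))
        ((Finset.univ.image B).filter (· < g t)) :=
      Finset.disjoint_filter_filter hdisj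
    have h1 : ((Finset.univ.image g).filter (· < g t)).card = (t : ℕ) := by
      have himg : (Finset.univ.image g).filter (· < g t) =
          (Finset.univ.filter (· < t)).image g := by
        ext y
        constructor
        · intro hy
          obtain ⟨hy1, hlt⟩ := Finset.mem_filter.mp hy
          obtain ⟨t', -, rfl⟩ := Finset.mem_image.mp hy1
          exact Finset.mem_image.mpr ⟨t', Finset.mem_filter.mpr
            ⟨Finset.mem_univ _, hg.lt_iff_lt.mp hlt⟩, rfl⟩
        · intro hy
          obtain ⟨t', ht', rfl⟩ := Finset.mem_image.mp hy
          have hlt := (Finset.mem_filter.mp ht').2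
          exact Finset.mem_filter.mpr
            ⟨Finset.mem_image.mpr ⟨t', Finset.mem_univ _, rfl⟩, hg hlt⟩
      rw [himg, Finset.card_image_of_injective _ hg.injective]
      have : Finset.univ.filter (· < t) = Finset.Iio t := by ext y; simp
      rw [this, Fin.card_Iio]
    have h2 : Even (((Finset.univ.image B).filter (· < g t)).card) := by
      have himg : (Finset.univ.image B).filter (· < g t) =
          (Finset.univ.filter (fun a => B a < g t)).image B := by
        ext y
        constructor
        · intro hy
          obtain ⟨hy1, hlt⟩ := Finset.mem_filter.mp hy
          obtain ⟨a, -, rfl⟩ := Finset.mem_image.mp hy1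
          exact Finset.mem_image.mpr ⟨a, Finset.mem_filter.mpr
            ⟨Finset.mem_univ _, hlt⟩, rfl⟩
        · intro hy
          obtain ⟨a, ha', rfl⟩ := Finset.mem_image.mp hy
          have hlt := (Finset.mem_filter.mp ha').2
          exact Finset.mem_filter.mpr
            ⟨Finset.mem_image.mpr ⟨a, Finset.mem_univ _, rfl⟩, hlt⟩
      rw [himg, Finset.card_image_of_injective _ hB.injective]
      exact even_count_pairs B hpair (g t) (fun a h => hgB t a h.symm)
    obtain ⟨c, hc⟩ := h2
    have hval : (s : ℕ) = (t : ℕ) + (c + c) := by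
      rw [hscard, hfilter, Finset.card_union_of_disjoint hdisj2, h1, ← hc]
    rw [hval, pow_add]
    have : ((-1:ℝ))^(c+c) = 1 := Even.neg_one_pow ⟨c, rfl⟩
    rw [this, mul_one]
  set ε : ℝ := if 0 < v (g 0) then 1 else -1 with hε
  have halt' : ∀ t : Fin (k+2), 0 < ε * ((-1:ℝ)^(t:ℕ) * v (g t)) := by
    intro t
    induction t using Fin.induction with
    | zero =>
      simp only [Fin.val_zero, pow_zero, one_mul]
      rcases lt_trichotomy 0 (v (g 0)) with h | h | h
      · rw [hε, if_pos h]; linarith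
      · exact absurd h.symm (hvg 0)
      · rw [hε, if_neg (by linarith)]; nlinarith
    | succ i ih =>
      have hab := halt i
      set a := v (g i.castSucc) with ha'
      set b := v (g i.succ) with hb'
      have ha0 : a ≠ 0 := hvg i.castSucc
      have haa : 0 < a * a := mul_self_pos.mpr ha0
      have hP : 0 < ε * ((-1:ℝ)^((i:ℕ)) * a) := by
        have : ((i.castSucc : Fin (k+2)) : ℕ) = (i : ℕ) := Fin.coe_castSucc i
        rw [← this]; exact ih
      have hval : ((i.succ : Fin (k+2)) : ℕ) = (i : ℕ) + 1 := Fin.val_succ i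
      rw [hval, pow_succ]
      nlinarith [mul_neg_of_pos_of_neg hP hab]
  have hterm : ∀ s : Fin ((k+(2*r+1))+1), 0 ≤ ε * ((-1:ℝ)^(s:ℕ) * d s * v (F s)) := by
    intro s
    have hmem : F s ∈ T := T.orderEmbOfFin_mem hcardT s
    rw [hT, Finset.mem_union] at hmem
    rcases hmem with hmem | hmem
    · obtain ⟨t, -, hteq⟩ := Finset.mem_image.mp hmem
      obtain ⟨s', hs'eq, hs'sign⟩ := hpos t
      have hss : s = s' := F.injective (by rw [hs'eq, ← hteq])
      subst hss
      rw [← hteq, hs'sign]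
      have := halt' t
      have := hdpos s
      nlinarith
    · obtain ⟨a, -, haeq⟩ := Finset.mem_image.mp hmem
      rw [← haeq, hvB a]
      simp
  have hterm0 : ∃ s : Fin ((k+(2*r+1))+1), 0 < ε * ((-1:ℝ)^(s:ℕ) * d s * v (F s)) := by
    obtain ⟨s, hseq, hsign⟩ := hpos 0
    refine ⟨s, ?_⟩
    rw [hseq, hsign]
    have h1 := halt' 0
    have h2 := hdpos s
    simp only [Fin.val_zero, pow_zero, one_mul] at h1 ⊢
    nlinarith
  have hsumpos : 0 < ∑ s : Fin ((k+(2*r+1))+1), ε * ((-1:ℝ)^(s:ℕ) * d s * v (F s)) := by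
    obtain ⟨s0, hs0⟩ := hterm0
    exact Finset.sum_pos' (fun s _ => hterm s) ⟨s0, Finset.mem_univ s0, hs0⟩
  rw [← Finset.mul_sum] at hsumpos
  rw [hsum0, mul_zero] at hsumpos
  exact lt_irrefl 0 hsumpos
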